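/- For every n ≥ 2, the number of permutations of {1,...,n} avoiding 13-2 and containing exactly one occurrence of 21-3 equals (n-2)·2^(n-3). -/

import Mathlib

/-- The value of the permutation at position `i` (0-indexed), or 0 if out of range. -/
def permVal {n : ℕ} (π : Equiv.Perm (Fin n)) (i : ℕ) : ℕ :=
  if h : i < n then (π ⟨i, h⟩ : ℕ) else 0

/-- Number of occurrences of the generalized pattern 12-3. -/
def occ12_3 {n : ℕ} (π : Equiv.Perm (Fin n)) : ℕ :=
  ((Finset.range n ×ˢ Finset.range n).filter (fun p =>
    p.1 + 1 < p.2 ∧ permVal π p.1 < permVal π (p.1 + 1) ∧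
      permVal π (p.1 + 1) < permVal π p.2)).card

/-- Number of occurrences of the generalized pattern 13-2. -/
def occ13_2 {n : ℕ} (π : Equiv.Perm (Fin n)) : ℕ :=
  ((Finset.range n ×ˢ Finset.range n).filter (fun p =>
    p.1 + 1 < p.2 ∧ permVal π p.1 < permVal π p.2 ∧
      permVal π p.2 < permVal π (p.1 + 1))).card

/-- Number of occurrences of the generalized pattern 21-3. -/
def occ21_3 {n : ℕ} (π : Equiv.Perm (Fin n)) : ℕ :=
  ((Finset.range n ×ˢ Finset.range n).filter (fun p =>
    p.1 + 1 < p.2 ∧ permVal π (p.1 + 1) < permVal π p.1 ∧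
      permVal π p.1 < permVal π p.2)).card

/-- Number of occurrences of the generalized pattern 23-1. -/
def occ23_1 {n : ℕ} (π : Equiv.Perm (Fin n)) : ℕ :=
  ((Finset.range n ×ˢ Finset.range n).filter (fun p =>
    p.1 + 1 < p.2 ∧ permVal π p.2 < permVal π p.1 ∧
      permVal π p.1 < permVal π (p.1 + 1))).card

/-- Number of occurrences of the generalized pattern 31-2. -/
def occ31_2 {n : ℕ} (π : Equiv.Perm (Fin n)) : ℕ :=
  ((Finset.range n ×ˢ Finset.range n).filter (fun p =>
    p.1 + 1 < p.2 ∧ permVal π (p.1 + 1) < permVal π p.2 ∧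
      permVal π p.2 < permVal π p.1)).card

/-- Number of occurrences of the generalized pattern 32-1. -/
def occ32_1 {n : ℕ} (π : Equiv.Perm (Fin n)) : ℕ :=
  ((Finset.range n ×ˢ Finset.range n).filter (fun p =>
    p.1 + 1 < p.2 ∧ permVal π p.2 < permVal π (p.1 + 1) ∧
      permVal π (p.1 + 1) < permVal π p.1)).card

/-- number of descents -/
def desc {n : ℕ} (π : Equiv.Perm (Fin n)) : ℕ :=
  ((Finset.range n).filter (fun i =>
    i + 1 < n ∧ permVal π (i+1) < permVal π i)).card

lemma permVal_lt {n : ℕ} (π : Equiv.Perm (Fin n)) {i : ℕ} (h : i < n) :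
    permVal π i < n := by
  simpa [permVal, h] using (π ⟨i, h⟩).isLt


lemma permVal_inj {n : ℕ} (π : Equiv.Perm (Fin n)) {i j : ℕ} (hi : i < n) (hj : j < n)
    (h : permVal π i = permVal π j) : i = j := by
  simp only [permVal, hi, hj, dif_pos] at h
  have := π.injective (Fin.ext h)
  exact congrArg Fin.val this

lemma permVal_ne {n : ℕ} (π : Equiv.Perm (Fin n)) {i j : ℕ} (hi : i < n) (hj : j < n)
    (h : i ≠ j) : permVal π i ≠ permVal π j :=
  fun hh => h (permVal_inj π hi hj hh)

lemma occ13_2_zero_iff {n : ℕ} (π : Equiv.Perm (Fin n)) :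
    occ13_2 π = 0 ↔ ∀ i j, i + 1 < j → j < n →
      ¬(permVal π i < permVal π j ∧ permVal π j < permVal π (i+1)) := by
  rw [occ13_2, Finset.card_eq_zero, Finset.filter_eq_empty_iff]
  constructor
  · intro h i j hij hj hcon
    have hmem : (i, j) ∈ Finset.range n ×ˢ Finset.range n := by
      simp only [Finset.mem_product, Finset.mem_range]
      exact ⟨by omega, hj⟩
    exact h hmem ⟨hij, hcon.1, hcon.2⟩
  · rintro h ⟨i, j⟩ hmem hcon
    simp only [Finset.mem_product, Finset.mem_range] at hmem
    exact h i j hcon.1 hmem.2 ⟨hcon.2.1, hcon.2.2⟩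

lemma desc_zero_iff {n : ℕ} (π : Equiv.Perm (Fin n)) :
    desc π = 0 ↔ ∀ i, i + 1 < n → permVal π i < permVal π (i+1) := by
  rw [desc, Finset.card_eq_zero, Finset.filter_eq_empty_iff]
  constructor
  · intro h i hi
    have hmem : i ∈ Finset.range n := Finset.mem_range.2 (by omega)
    have h2 := h hmem
    push_neg at h2
    have h3 := h2 hi
    have h4 : permVal π i ≠ permVal π (i+1) := permVal_ne π (by omega) hi (by omega)
    omega
  · intro h i _ hcon
    have := h i hcon.1
    omega

lemma desc_eq_zero_imp_one {n : ℕ} (π : Equiv.Perm (Fin n)) (h : desc π = 0) : π = 1 := by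
  rw [desc_zero_iff] at h
  have mono : ∀ i j : ℕ, i ≤ j → j < n → permVal π i ≤ permVal π j := by
    intro i j hij hj
    induction j with
    | zero => have : i = 0 := by omega
              subst this; exact le_refl _
    | succ k ih =>
      rcases Nat.lt_or_ge i (k+1) with h1 | h1
      · have ha := h k hj
        have hb := ih (by omega) (by omega)
        omega
      · have : i = k + 1 := by omega
        subst this; exact le_refl _
  have smono : StrictMono (fun y : Fin n => π y) := by
    intro a b hab
    have h2 : permVal π a ≤ permVal π b := mono a b (le_of_lt hab) b.isLt
    have h3 : permVal π (a : ℕ) ≠ permVal π (b : ℕ) := permVal_ne π a.isLt b.isLt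
      (by intro hc; exact absurd (Fin.ext hc : a = b) (ne_of_lt hab))
    simp only [permVal, a.isLt, b.isLt, dif_pos, Fin.eta] at h2 h3
    exact lt_of_le_of_ne (by exact_mod_cast h2) (by
      intro hc; exact h3 (congrArg Fin.val hc))
  have hmr : ∀ a b : Fin n, π a ≤ π b ↔ a ≤ b := by
    intro a b
    constructor
    · intro hle
      by_contra hc
      push_neg at hc
      exact absurd (smono hc) (by simp [not_lt.2 hle])
    · intro hle
      rcases lt_or_eq_of_le hle with h1 | h1
      · exact le_of_lt (smono h1)
      · exact le_of_eq (congrArg _ h1)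
  have he : (⟨π, @fun a b => hmr a b⟩ : Fin n ≃o Fin n) = OrderIso.refl (Fin n) :=
    Subsingleton.elim _ _
  have : ∀ x, π x = x := by
    intro x
    exact congrArg (fun f : Fin n ≃o Fin n => f x) he
  exact Equiv.ext this

section Comb

variable (n m : ℕ)

def combFun (hm : m < n) (α : Equiv.Perm (Fin m)) (β : Equiv.Perm (Fin (n - m - 1)))
    (x : Fin n) : Fin n :=
  if hx : (x : ℕ) < m then
    ⟨n - m - 1 + (α ⟨x, hx⟩ : ℕ), by have := (α ⟨x, hx⟩).isLt; omega⟩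
  else if hx2 : (x : ℕ) = m then ⟨n - 1, by omega⟩
  else ⟨(β ⟨(x : ℕ) - m - 1, by have := x.isLt; omega⟩ : ℕ), by
    have := (β ⟨(x : ℕ) - m - 1, by have := x.isLt; omega⟩).isLt; omega⟩

lemma combFun_inj (hm : m < n) (α : Equiv.Perm (Fin m)) (β : Equiv.Perm (Fin (n - m - 1))) :
    Function.Injective (combFun n m hm α β) := by
  intro x y hxy
  unfold combFun at hxy
  by_cases hx : (x : ℕ) < m <;> by_cases hy : (y : ℕ) < m
  · rw [dif_pos hx, dif_pos hy, Fin.mk.injEq] at hxy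
    have h1 : (α ⟨x, hx⟩ : ℕ) = (α ⟨y, hy⟩ : ℕ) := by omega
    have h2 := congrArg Fin.val (α.injective (Fin.ext h1))
    simp only at h2
    exact Fin.ext h2
  · exfalso
    rw [dif_pos hx] at hxy
    by_cases hy2 : (y : ℕ) = m
    · rw [dif_neg hy, dif_pos hy2, Fin.mk.injEq] at hxy
      have := (α ⟨x, hx⟩).isLt
      omega
    · rw [dif_neg hy, dif_neg hy2, Fin.mk.injEq] at hxy
      have h1 := (β ⟨(y : ℕ) - m - 1, by have := y.isLt; omega⟩).isLt
      have h2 := (α ⟨x, hx⟩).isLt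
      omega
  · exfalso
    rw [dif_pos hy] at hxy
    by_cases hx2 : (x : ℕ) = m
    · rw [dif_neg hx, dif_pos hx2, Fin.mk.injEq] at hxy
      have := (α ⟨y, hy⟩).isLt
      omega
    · rw [dif_neg hx, dif_neg hx2, Fin.mk.injEq] at hxy
      have h1 := (β ⟨(x : ℕ) - m - 1, by have := x.isLt; omega⟩).isLt
      have h2 := (α ⟨y, hy⟩).isLt
      omega
  · rw [dif_neg hx, dif_neg hy] at hxy
    by_cases hx2 : (x : ℕ) = m <;> by_cases hy2 : (y : ℕ) = m
    · exact Fin.ext (by omega)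
    · exfalso
      rw [dif_pos hx2, dif_neg hy2, Fin.mk.injEq] at hxy
      have h1 := (β ⟨(y : ℕ) - m - 1, by have := y.isLt; omega⟩).isLt
      omega
    · exfalso
      rw [dif_neg hx2, dif_pos hy2, Fin.mk.injEq] at hxy
      have h1 := (β ⟨(x : ℕ) - m - 1, by have := x.isLt; omega⟩).isLt
      omega
    · rw [dif_neg hx2, dif_neg hy2, Fin.mk.injEq] at hxy
      have h1 : (⟨(x : ℕ) - m - 1, by have := x.isLt; omega⟩ : Fin (n - m - 1)) =
          ⟨(y : ℕ) - m - 1, by have := y.isLt; omega⟩ := β.injective (Fin.ext hxy)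
      have h2 := congrArg Fin.val h1
      simp only at h2
      exact Fin.ext (by omega)

noncomputable def comb (hm : m < n) (α : Equiv.Perm (Fin m)) (β : Equiv.Perm (Fin (n - m - 1))) :
    Equiv.Perm (Fin n) :=
  Equiv.ofBijective _ (Finite.injective_iff_bijective.mp (combFun_inj n m hm α β))

variable {n m} (hm : m < n) (α : Equiv.Perm (Fin m)) (β : Equiv.Perm (Fin (n - m - 1)))

lemma permVal_comb_lt {x : ℕ} (hx : x < m) :
    permVal (comb n m hm α β) x = (n - m - 1) + permVal α x := by
  have hxn : x < n := by omega
  simp only [permVal, hxn, hx, dif_pos, comb, Equiv.ofBijective_apply, combFun, dif_pos]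

lemma permVal_comb_eq : permVal (comb n m hm α β) m = n - 1 := by
  simp [permVal, hm, comb, combFun]

lemma permVal_comb_gt {x : ℕ} (hx : m < x) (hxn : x < n) :
    permVal (comb n m hm α β) x = permVal β (x - m - 1) := by
  have hb : x - m - 1 < n - m - 1 := by omega
  simp only [permVal, hxn, hb, dif_pos, comb, Equiv.ofBijective_apply, combFun]
  rw [dif_neg (by omega), dif_neg (by omega)]

lemma comb_lb {x : ℕ} (hx : x < m) : n - m - 1 ≤ permVal (comb n m hm α β) x := by
  rw [permVal_comb_lt hm α β hx]; omega

lemma comb_ub {x : ℕ} (hx : x < m) : permVal (comb n m hm α β) x ≤ n - 2 := by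
  rw [permVal_comb_lt hm α β hx]
  have := permVal_lt α hx
  omega

lemma comb_gt_ub {x : ℕ} (hx : m < x) (hxn : x < n) :
    permVal (comb n m hm α β) x < n - m - 1 := by
  rw [permVal_comb_gt hm α β hx hxn]
  exact permVal_lt β (by omega)

end Comb

section Transfer

variable {n m : ℕ} (hm : m < n) (α : Equiv.Perm (Fin m)) (β : Equiv.Perm (Fin (n - m - 1)))

lemma occ21_3_comb :
    occ21_3 (comb n m hm α β) = occ21_3 α + desc α + occ21_3 β := by
  classical
  set σ := comb n m hm α β with hσ
  have hv1 : ∀ x : ℕ, x < m → permVal σ x = (n - m - 1) + permVal α x :=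
    fun x hx => permVal_comb_lt hm α β hx
  have hv2 : permVal σ m = n - 1 := permVal_comb_eq hm α β
  have hv3 : ∀ x : ℕ, m < x → x < n → permVal σ x = permVal β (x - m - 1) :=
    fun x hx hxn => permVal_comb_gt hm α β hx hxn
  have hub : ∀ x : ℕ, x < m → permVal σ x ≤ n - 2 := fun x hx => comb_ub hm α β hx
  have hlb : ∀ x : ℕ, x < m → n - m - 1 ≤ permVal σ x := fun x hx => comb_lb hm α β hx
  have hgub : ∀ x : ℕ, m < x → x < n → permVal σ x < n - m - 1 :=
    fun x hx hxn => comb_gt_ub hm α β hx hxn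
  set S₁ := (Finset.range m ×ˢ Finset.range m).filter (fun p =>
    p.1 + 1 < p.2 ∧ permVal α (p.1 + 1) < permVal α p.1 ∧ permVal α p.1 < permVal α p.2)
    with hS₁
  set S₂ : Finset (ℕ × ℕ) := ((Finset.range m).filter (fun i =>
    i + 1 < m ∧ permVal α (i+1) < permVal α i)).image (fun i => (i, m)) with hS₂
  set S₃ : Finset (ℕ × ℕ) := ((Finset.range (n-m-1) ×ˢ Finset.range (n-m-1)).filter (fun p =>
    p.1 + 1 < p.2 ∧ permVal β (p.1 + 1) < permVal β p.1 ∧ permVal β p.1 < permVal β p.2)).image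
    (fun p => (p.1 + m + 1, p.2 + m + 1)) with hS₃
  have hset : (Finset.range n ×ˢ Finset.range n).filter (fun p =>
      p.1 + 1 < p.2 ∧ permVal σ (p.1 + 1) < permVal σ p.1 ∧ permVal σ p.1 < permVal σ p.2)
      = S₁ ∪ S₂ ∪ S₃ := by
    ext ⟨i, j⟩
    rw [Finset.mem_union, Finset.mem_union]
    simp only [Finset.mem_filter, Finset.mem_product, Finset.mem_range]
    constructor
    · rintro ⟨⟨hi, hj⟩, hij, hd, hr⟩
      rcases Nat.lt_trichotomy j m with hjm | hjm | hjm
      · -- all inside α region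
        left; left
        rw [hv1 i (by omega), hv1 (i+1) (by omega)] at hd
        rw [hv1 i (by omega), hv1 j (by omega)] at hr
        rw [hS₁, Finset.mem_filter, Finset.mem_product]
        dsimp only
        exact ⟨⟨Finset.mem_range.2 (by omega), Finset.mem_range.2 hjm⟩, hij,
          by omega, by omega⟩
      · -- j = m : descent of α
        subst hjm
        left; right
        rw [hS₂, Finset.mem_image]
        refine ⟨i, Finset.mem_filter.2 ⟨Finset.mem_range.2 (by omega), by omega, ?_⟩, rfl⟩
        rw [hv1 i (by omega), hv1 (i+1) (by omega)] at hd
        omega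
      · -- j > m
        rcases Nat.lt_trichotomy i m with him | him | him
        · exfalso
          have h1 := hlb i him
          have h2 := hgub j hjm hj
          omega
        · exfalso
          subst him
          have h2 := hgub j hjm hj
          rw [hv2] at hr
          omega
        · right
          rw [hS₃, Finset.mem_image]
          refine ⟨(i - m - 1, j - m - 1), Finset.mem_filter.2 ⟨Finset.mem_product.2
            ⟨Finset.mem_range.2 (by omega), Finset.mem_range.2 (by omega)⟩, by omega, ?_, ?_⟩,
            by simp only [Prod.mk.injEq]; omega⟩
          · rw [hv3 (i+1) (by omega) (by omega)] at hd
            rw [hv3 i (by omega) (by omega)] at hd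
            have e : i + 1 - m - 1 = i - m - 1 + 1 := by omega
            rw [e] at hd
            exact hd
          · rw [hv3 i (by omega) (by omega), hv3 j (by omega) (by omega)] at hr
            exact hr
    · rintro ((h | h) | h)
      · rw [hS₁, Finset.mem_filter, Finset.mem_product, Finset.mem_range, Finset.mem_range] at h
        dsimp only at h
        obtain ⟨⟨hi, hj⟩, hij, hd, hr⟩ := h
        refine ⟨⟨by omega, by omega⟩, hij, ?_, ?_⟩
        · rw [hv1 i (by omega), hv1 (i+1) (by omega)]; omega
        · rw [hv1 i (by omega), hv1 j (by omega)]; omega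
      · rw [hS₂, Finset.mem_image] at h
        obtain ⟨i', hi', heq⟩ := h
        have e1 : i' = i := congrArg Prod.fst heq
        have e2 : m = j := congrArg Prod.snd heq
        subst e1; subst e2
        rw [Finset.mem_filter, Finset.mem_range] at hi'
        obtain ⟨h1, h2, h3⟩ := hi'
        refine ⟨⟨by omega, by omega⟩, by omega, ?_, ?_⟩
        · rw [hv1 i' (by omega), hv1 (i'+1) (by omega)]; omega
        · rw [hv1 i' (by omega), hv2]
          have := hub i' (by omega)
          have := permVal_lt α (show i' < m by omega)
          omega
      · rw [hS₃, Finset.mem_image] at h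
        obtain ⟨⟨a, b⟩, hab, heq⟩ := h
        have e1 : a + m + 1 = i := congrArg Prod.fst heq
        have e2 : b + m + 1 = j := congrArg Prod.snd heq
        rw [Finset.mem_filter, Finset.mem_product, Finset.mem_range, Finset.mem_range] at hab
        obtain ⟨⟨ha, hb⟩, hab1, hab2, hab3⟩ := hab
        subst e1; subst e2
        refine ⟨⟨by omega, by omega⟩, by omega, ?_, ?_⟩
        · rw [hv3 (a + m + 1 + 1) (by omega) (by omega), hv3 (a + m + 1) (by omega) (by omega)]
          have e1 : a + m + 1 + 1 - m - 1 = a + 1 := by omega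
          have e2 : a + m + 1 - m - 1 = a := by omega
          rw [e1, e2]
          exact hab2
        · rw [hv3 (a + m + 1) (by omega) (by omega), hv3 (b + m + 1) (by omega) (by omega)]
          have e2 : a + m + 1 - m - 1 = a := by omega
          have e3 : b + m + 1 - m - 1 = b := by omega
          rw [e2, e3]
          exact hab3
  have hd12 : Disjoint S₁ S₂ := by
    rw [Finset.disjoint_left]
    rintro ⟨i, j⟩ h1 h2
    rw [hS₁, Finset.mem_filter, Finset.mem_product] at h1
    dsimp only at h1
    rw [hS₂, Finset.mem_image] at h2
    obtain ⟨i', _, heq⟩ := h2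
    have e2 : m = j := congrArg Prod.snd heq
    have := Finset.mem_range.1 h1.1.2
    omega
  have hd13 : Disjoint (S₁ ∪ S₂) S₃ := by
    rw [Finset.disjoint_left]
    rintro ⟨i, j⟩ h1 h2
    rw [hS₃, Finset.mem_image] at h2
    obtain ⟨⟨a, b⟩, hab, heq⟩ := h2
    have e1 : a + m + 1 = i := congrArg Prod.fst heq
    have e2 : b + m + 1 = j := congrArg Prod.snd heq
    rcases Finset.mem_union.1 h1 with h1 | h1
    · rw [hS₁, Finset.mem_filter, Finset.mem_product] at h1
      dsimp only at h1
      have h4 := Finset.mem_range.1 h1.1.2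
      omega
    · rw [hS₂, Finset.mem_image] at h1
      obtain ⟨i', hi', heq'⟩ := h1
      have e3 : m = j := congrArg Prod.snd heq'
      omega
  have hc2 : S₂.card = desc α := by
    rw [hS₂, Finset.card_image_of_injective _ (fun a b hab => by
      exact congrArg Prod.fst hab)]
    rfl
  have hc3 : S₃.card = occ21_3 β := by
    rw [hS₃, Finset.card_image_of_injective _ ?_]
    · rfl
    · rintro ⟨a1, a2⟩ ⟨b1, b2⟩ hab
      have h1 : a1 + m + 1 = b1 + m + 1 := congrArg Prod.fst hab
      have h2 : a2 + m + 1 = b2 + m + 1 := congrArg Prod.snd hab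
      exact Prod.ext (by omega) (by omega)
  have hc1 : S₁.card = occ21_3 α := by rw [hS₁]; rfl
  show ((Finset.range n ×ˢ Finset.range n).filter _).card = _
  rw [hset, Finset.card_union_of_disjoint hd13, Finset.card_union_of_disjoint hd12,
    hc1, hc2, hc3]

end Transfer

lemma occ13_2_comb {n m : ℕ} (hm : m < n) (α : Equiv.Perm (Fin m))
    (β : Equiv.Perm (Fin (n - m - 1))) :
    occ13_2 (comb n m hm α β) = occ13_2 α + occ13_2 β := by
  classical
  set σ := comb n m hm α β with hσ
  have hv1 : ∀ x : ℕ, x < m → permVal σ x = (n - m - 1) + permVal α x :=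
    fun x hx => permVal_comb_lt hm α β hx
  have hv2 : permVal σ m = n - 1 := permVal_comb_eq hm α β
  have hv3 : ∀ x : ℕ, m < x → x < n → permVal σ x = permVal β (x - m - 1) :=
    fun x hx hxn => permVal_comb_gt hm α β hx hxn
  have hlb : ∀ x : ℕ, x < m → n - m - 1 ≤ permVal σ x := fun x hx => comb_lb hm α β hx
  have hgub : ∀ x : ℕ, m < x → x < n → permVal σ x < n - m - 1 :=
    fun x hx hxn => comb_gt_ub hm α β hx hxn
  set S₁ := (Finset.range m ×ˢ Finset.range m).filter (fun p =>
    p.1 + 1 < p.2 ∧ permVal α p.1 < permVal α p.2 ∧ permVal α p.2 < permVal α (p.1 + 1))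
    with hS₁
  set S₃ : Finset (ℕ × ℕ) := ((Finset.range (n-m-1) ×ˢ Finset.range (n-m-1)).filter (fun p =>
    p.1 + 1 < p.2 ∧ permVal β p.1 < permVal β p.2 ∧ permVal β p.2 < permVal β (p.1 + 1))).image
    (fun p => (p.1 + m + 1, p.2 + m + 1)) with hS₃
  have hset : (Finset.range n ×ˢ Finset.range n).filter (fun p =>
      p.1 + 1 < p.2 ∧ permVal σ p.1 < permVal σ p.2 ∧ permVal σ p.2 < permVal σ (p.1 + 1))
      = S₁ ∪ S₃ := by
    ext ⟨i, j⟩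
    rw [Finset.mem_union]
    simp only [Finset.mem_filter, Finset.mem_product, Finset.mem_range]
    constructor
    · rintro ⟨⟨hi, hj⟩, hij, h1, h2⟩
      rcases Nat.lt_trichotomy j m with hjm | hjm | hjm
      · left
        rw [hv1 i (by omega), hv1 j (by omega)] at h1
        rw [hv1 j (by omega), hv1 (i+1) (by omega)] at h2
        rw [hS₁, Finset.mem_filter, Finset.mem_product]
        dsimp only
        exact ⟨⟨Finset.mem_range.2 (by omega), Finset.mem_range.2 hjm⟩, hij,
          by omega, by omega⟩
      · exfalso
        subst hjm
        rw [hv2] at h1 h2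
        have := permVal_lt σ (show i + 1 < n by omega)
        omega
      · rcases Nat.lt_trichotomy i m with him | him | him
        · exfalso
          have := hlb i him
          have := hgub j hjm hj
          omega
        · exfalso
          subst him
          rw [hv2] at h1
          have := hgub j hjm hj
          omega
        · right
          rw [hS₃, Finset.mem_image]
          refine ⟨(i - m - 1, j - m - 1), Finset.mem_filter.2 ⟨Finset.mem_product.2
            ⟨Finset.mem_range.2 (by omega), Finset.mem_range.2 (by omega)⟩, by omega, ?_, ?_⟩,
            by simp only [Prod.mk.injEq]; omega⟩
          · rw [hv3 i (by omega) (by omega), hv3 j (by omega) (by omega)] at h1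
            exact h1
          · rw [hv3 j (by omega) (by omega)] at h2
            rw [hv3 (i+1) (by omega) (by omega)] at h2
            have e : i + 1 - m - 1 = i - m - 1 + 1 := by omega
            rw [e] at h2
            exact h2
    · rintro (h | h)
      · rw [hS₁, Finset.mem_filter, Finset.mem_product, Finset.mem_range, Finset.mem_range] at h
        dsimp only at h
        obtain ⟨⟨hi, hj⟩, hij, h1, h2⟩ := h
        refine ⟨⟨by omega, by omega⟩, hij, ?_, ?_⟩
        · rw [hv1 i (by omega), hv1 j (by omega)]; omega
        · rw [hv1 j (by omega), hv1 (i+1) (by omega)]; omega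
      · rw [hS₃, Finset.mem_image] at h
        obtain ⟨⟨a, b⟩, hab, heq⟩ := h
        have e1 : a + m + 1 = i := congrArg Prod.fst heq
        have e2 : b + m + 1 = j := congrArg Prod.snd heq
        rw [Finset.mem_filter, Finset.mem_product, Finset.mem_range, Finset.mem_range] at hab
        obtain ⟨⟨ha, hb⟩, hab1, hab2, hab3⟩ := hab
        subst e1; subst e2
        refine ⟨⟨by omega, by omega⟩, by omega, ?_, ?_⟩
        · rw [hv3 (a + m + 1) (by omega) (by omega), hv3 (b + m + 1) (by omega) (by omega)]
          have e2 : a + m + 1 - m - 1 = a := by omega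
          have e3 : b + m + 1 - m - 1 = b := by omega
          rw [e2, e3]
          exact hab2
        · rw [hv3 (b + m + 1) (by omega) (by omega), hv3 (a + m + 1 + 1) (by omega) (by omega)]
          have e1 : a + m + 1 + 1 - m - 1 = a + 1 := by omega
          have e3 : b + m + 1 - m - 1 = b := by omega
          rw [e1, e3]
          exact hab3
  have hd13 : Disjoint S₁ S₃ := by
    rw [Finset.disjoint_left]
    rintro ⟨i, j⟩ h1 h2
    rw [hS₁, Finset.mem_filter, Finset.mem_product] at h1
    dsimp only at h1
    have h4 := Finset.mem_range.1 h1.1.1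
    rw [hS₃, Finset.mem_image] at h2
    obtain ⟨⟨a, b⟩, hab, heq⟩ := h2
    have e1 : a + m + 1 = i := congrArg Prod.fst heq
    have e2 : b + m + 1 = j := congrArg Prod.snd heq
    have h5 := Finset.mem_range.1 h1.1.2
    omega
  have hc3 : S₃.card = occ13_2 β := by
    rw [hS₃, Finset.card_image_of_injective _ ?_]
    · rfl
    · rintro ⟨a1, a2⟩ ⟨b1, b2⟩ hab
      have h1 : a1 + m + 1 = b1 + m + 1 := congrArg Prod.fst hab
      have h2 : a2 + m + 1 = b2 + m + 1 := congrArg Prod.snd hab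
      exact Prod.ext (by omega) (by omega)
  have hc1 : S₁.card = occ13_2 α := by rw [hS₁]; rfl
  show ((Finset.range n ×ˢ Finset.range n).filter _).card = _
  rw [hset, Finset.card_union_of_disjoint hd13, hc1, hc3]

lemma desc_comb {n m : ℕ} (hm : m < n) (α : Equiv.Perm (Fin m))
    (β : Equiv.Perm (Fin (n - m - 1))) :
    desc (comb n m hm α β) = desc α + desc β + (if m + 1 < n then 1 else 0) := by
  classical
  set σ := comb n m hm α β with hσ
  have hv1 : ∀ x : ℕ, x < m → permVal σ x = (n - m - 1) + permVal α x :=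
    fun x hx => permVal_comb_lt hm α β hx
  have hv2 : permVal σ m = n - 1 := permVal_comb_eq hm α β
  have hv3 : ∀ x : ℕ, m < x → x < n → permVal σ x = permVal β (x - m - 1) :=
    fun x hx hxn => permVal_comb_gt hm α β hx hxn
  have hub : ∀ x : ℕ, x < m → permVal σ x ≤ n - 2 := fun x hx => comb_ub hm α β hx
  have hgub : ∀ x : ℕ, m < x → x < n → permVal σ x < n - m - 1 :=
    fun x hx hxn => comb_gt_ub hm α β hx hxn
  set D₁ := (Finset.range m).filter (fun i =>
    i + 1 < m ∧ permVal α (i+1) < permVal α i) with hD₁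
  set D₂ : Finset ℕ := if m + 1 < n then {m} else ∅ with hD₂
  set D₃ : Finset ℕ := ((Finset.range (n-m-1)).filter (fun i =>
    i + 1 < n - m - 1 ∧ permVal β (i+1) < permVal β i)).image (· + m + 1) with hD₃
  have hset : (Finset.range n).filter (fun i => i + 1 < n ∧ permVal σ (i+1) < permVal σ i)
      = D₁ ∪ D₂ ∪ D₃ := by
    ext i
    rw [Finset.mem_union, Finset.mem_union]
    simp only [Finset.mem_filter, Finset.mem_range]
    constructor
    · rintro ⟨hi, hin, hd⟩
      rcases Nat.lt_trichotomy (i+1) m with him | him | him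
      · left; left
        rw [hD₁, Finset.mem_filter, Finset.mem_range]
        rw [hv1 i (by omega), hv1 (i+1) (by omega)] at hd
        exact ⟨by omega, him, by omega⟩
      · exfalso
        rw [← him] at hv2
        rw [hv2] at hd
        have := hub i (by omega)
        omega
      · rcases Nat.lt_trichotomy i m with h2 | h2 | h2
        · omega
        · left; right
          rw [hD₂, if_pos (by omega)]
          exact Finset.mem_singleton.2 h2
        · right
          rw [hD₃, Finset.mem_image]
          refine ⟨i - m - 1, Finset.mem_filter.2 ⟨Finset.mem_range.2 (by omega), by omega, ?_⟩,
            by omega⟩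
          rw [hv3 i (by omega) (by omega), hv3 (i+1) (by omega) (by omega)] at hd
          have e : i + 1 - m - 1 = i - m - 1 + 1 := by omega
          rw [e] at hd
          exact hd
    · rintro ((h | h) | h)
      · rw [hD₁, Finset.mem_filter, Finset.mem_range] at h
        obtain ⟨h1, h2, h3⟩ := h
        refine ⟨by omega, by omega, ?_⟩
        rw [hv1 i (by omega), hv1 (i+1) (by omega)]
        omega
      · rw [hD₂] at h
        by_cases hc : m + 1 < n
        · rw [if_pos hc, Finset.mem_singleton] at h
          subst h
          refine ⟨by omega, by omega, ?_⟩
          rw [hv2, hv3 (i+1) (by omega) (by omega)]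
          have := permVal_lt β (show i + 1 - i - 1 < n - i - 1 by omega)
          omega
        · rw [if_neg hc] at h
          exact absurd h (Finset.notMem_empty i)
      · rw [hD₃, Finset.mem_image] at h
        obtain ⟨a, ha, heq⟩ := h
        rw [Finset.mem_filter, Finset.mem_range] at ha
        obtain ⟨h1, h2, h3⟩ := ha
        subst heq
        refine ⟨by omega, by omega, ?_⟩
        rw [hv3 (a + m + 1) (by omega) (by omega), hv3 (a + m + 1 + 1) (by omega) (by omega)]
        have e1 : a + m + 1 + 1 - m - 1 = a + 1 := by omega
        have e2 : a + m + 1 - m - 1 = a := by omega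
        rw [e1, e2]
        exact h3
  have hd12 : Disjoint D₁ D₂ := by
    rw [Finset.disjoint_left]
    intro i h1 h2
    rw [hD₁, Finset.mem_filter, Finset.mem_range] at h1
    rw [hD₂] at h2
    by_cases hc : m + 1 < n
    · rw [if_pos hc, Finset.mem_singleton] at h2
      omega
    · rw [if_neg hc] at h2
      exact absurd h2 (Finset.notMem_empty i)
  have hd13 : Disjoint (D₁ ∪ D₂) D₃ := by
    rw [Finset.disjoint_left]
    intro i h1 h2
    rw [hD₃, Finset.mem_image] at h2
    obtain ⟨a, _, heq⟩ := h2
    rcases Finset.mem_union.1 h1 with h1 | h1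
    · rw [hD₁, Finset.mem_filter, Finset.mem_range] at h1
      omega
    · rw [hD₂] at h1
      by_cases hc : m + 1 < n
      · rw [if_pos hc, Finset.mem_singleton] at h1
        omega
      · rw [if_neg hc] at h1
        exact absurd h1 (Finset.notMem_empty i)
  have hc2 : D₂.card = if m + 1 < n then 1 else 0 := by
    rw [hD₂]
    by_cases hc : m + 1 < n
    · rw [if_pos hc, if_pos hc, Finset.card_singleton]
    · rw [if_neg hc, if_neg hc, Finset.card_empty]
  have hc3 : D₃.card = desc β := by
    rw [hD₃, Finset.card_image_of_injective _ (fun a b hab => by omega)]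
    rfl
  have hc1 : D₁.card = desc α := by rw [hD₁]; rfl
  show ((Finset.range n).filter _).card = _
  rw [hset, Finset.card_union_of_disjoint hd13, Finset.card_union_of_disjoint hd12,
    hc1, hc2, hc3]
  omega

section Classify

variable {n m : ℕ}

lemma sep_lemma (σ : Equiv.Perm (Fin n)) (h0 : occ13_2 σ = 0) (hm : m < n)
    (hmax : permVal σ m = n - 1) :
    ∀ i, i < m → ∀ j, m < j → j < n → permVal σ j < permVal σ i := by
  have noOcc := (occ13_2_zero_iff σ).1 h0
  have main : ∀ t i, m - i ≤ t → i < m → ∀ j, m < j → j < n →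
      permVal σ j < permVal σ i := by
    intro t
    induction t with
    | zero => intro i ht hi; omega
    | succ t ih =>
      intro i ht hi j hj1 hj2
      by_contra hcon
      push_neg at hcon
      have hne : permVal σ i ≠ permVal σ j := permVal_ne σ (by omega) (by omega) (by omega)
      have hlt : permVal σ i < permVal σ j := by omega
      rcases Nat.lt_or_ge (i+1) m with him | him
      · have h2 := ih (i+1) (by omega) (by omega) j hj1 hj2
        exact noOcc i j (by omega) (by omega) ⟨hlt, h2⟩
      · have him2 : i + 1 = m := by omega
        have hjn : permVal σ j < n := permVal_lt σ hj2
        have hjne : permVal σ j ≠ n - 1 := by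
          rw [← hmax]
          exact permVal_ne σ (by omega) (by omega) (by omega)
        refine noOcc i j (by omega) (by omega) ⟨hlt, ?_⟩
        rw [him2, hmax]
        omega
  exact fun i hi j hj1 hj2 => main m i (by omega) hi j hj1 hj2

lemma prefix_lb (σ : Equiv.Perm (Fin n)) (h0 : occ13_2 σ = 0) (hm : m < n)
    (hmax : permVal σ m = n - 1) :
    ∀ i, i < m → n - m - 1 ≤ permVal σ i := by
  intro i hi
  have hsep := sep_lemma σ h0 hm hmax i hi
  set T := (Finset.Ioo m n).image (permVal σ) with hT
  have hTcard : T.card = n - m - 1 := by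
    rw [hT, Finset.card_image_of_injOn, Nat.card_Ioo]
    intro a ha b hb hab
    rw [Finset.mem_coe, Finset.mem_Ioo] at ha hb
    exact permVal_inj σ (by omega) (by omega) hab
  have hsub : T ⊆ Finset.Iio (permVal σ i) := by
    intro x hx
    rw [hT, Finset.mem_image] at hx
    obtain ⟨j, hj, rfl⟩ := hx
    rw [Finset.mem_Ioo] at hj
    exact Finset.mem_Iio.2 (hsep j hj.1 hj.2)
  have := Finset.card_le_card hsub
  rw [hTcard, Nat.card_Iio] at this
  omega

lemma prefix_ub (σ : Equiv.Perm (Fin n)) (hm : m < n)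
    (hmax : permVal σ m = n - 1) :
    ∀ i, i < m → permVal σ i ≤ n - 2 := by
  intro i hi
  have h1 := permVal_lt σ (show i < n by omega)
  have h2 : permVal σ i ≠ n - 1 := by
    rw [← hmax]
    exact permVal_ne σ (by omega) (by omega) (by omega)
  omega

lemma suffix_ub (σ : Equiv.Perm (Fin n)) (h0 : occ13_2 σ = 0) (hm : m < n)
    (hmax : permVal σ m = n - 1) :
    ∀ j, m < j → j < n → permVal σ j < n - m - 1 := by
  intro j hj1 hj2
  by_contra hcon
  push_neg at hcon
  set P := ((Finset.range m).image (permVal σ)) ∪ {n-1} with hP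
  have hPcard : P.card = m + 1 := by
    rw [hP, Finset.card_union_of_disjoint, Finset.card_image_of_injOn, Finset.card_range,
      Finset.card_singleton]
    · intro a ha b hb hab
      rw [Finset.mem_coe, Finset.mem_range] at ha hb
      exact permVal_inj σ (by omega) (by omega) hab
    · rw [Finset.disjoint_right]
      intro x hx hx2
      rw [Finset.mem_singleton] at hx
      rw [Finset.mem_image] at hx2
      obtain ⟨a, ha, haa⟩ := hx2
      rw [Finset.mem_range] at ha
      have := prefix_ub σ hm hmax a ha
      omega
  have hsub : P ⊆ Finset.Ioc (permVal σ j) (n-1) := by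
    intro x hx
    rw [hP, Finset.mem_union] at hx
    rcases hx with hx | hx
    · rw [Finset.mem_image] at hx
      obtain ⟨a, ha, rfl⟩ := hx
      rw [Finset.mem_range] at ha
      have h2 := sep_lemma σ h0 hm hmax a ha j hj1 hj2
      have h3 := prefix_ub σ hm hmax a ha
      rw [Finset.mem_Ioc]
      omega
    · rw [Finset.mem_singleton] at hx
      subst hx
      rw [Finset.mem_Ioc]
      have h4 : permVal σ j ≠ n - 1 := by
        rw [← hmax]
        exact permVal_ne σ (by omega) (by omega) (by omega)
      have h5 := permVal_lt σ hj2
      omega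
  have := Finset.card_le_card hsub
  rw [hPcard, Nat.card_Ioc] at this
  omega

lemma exists_comb (hm : m < n) (σ : Equiv.Perm (Fin n)) (h0 : occ13_2 σ = 0)
    (hmax : permVal σ m = n - 1) :
    ∃ (α : Equiv.Perm (Fin m)) (β : Equiv.Perm (Fin (n - m - 1))),
      σ = comb n m hm α β := by
  have hlb := prefix_lb σ h0 hm hmax
  have hub := prefix_ub σ hm hmax
  have hsub := suffix_ub σ h0 hm hmax
  have hαb : ∀ x : Fin m, permVal σ x - (n - m - 1) < m := by
    intro x
    have h1 := hub x x.isLt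
    have h2 := hlb x x.isLt
    have := x.isLt
    omega
  set fα : Fin m → Fin m := fun x => ⟨permVal σ x - (n - m - 1), hαb x⟩ with hfα
  have hαinj : Function.Injective fα := by
    intro a b hab
    rw [hfα, Fin.mk.injEq] at hab
    have h1 := hlb a a.isLt
    have h2 := hlb b b.isLt
    have h3 : permVal σ a = permVal σ b := by omega
    exact Fin.ext (permVal_inj σ (by omega) (by omega) h3)
  set α : Equiv.Perm (Fin m) :=
    Equiv.ofBijective fα (Finite.injective_iff_bijective.mp hαinj) with hα
  have hβb : ∀ x : Fin (n - m - 1), permVal σ (m + 1 + x) < n - m - 1 := by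
    intro x
    have := x.isLt
    exact hsub (m + 1 + x) (by omega) (by omega)
  set fβ : Fin (n - m - 1) → Fin (n - m - 1) := fun x => ⟨permVal σ (m + 1 + x), hβb x⟩
    with hfβ
  have hβinj : Function.Injective fβ := by
    intro a b hab
    rw [hfβ, Fin.mk.injEq] at hab
    have := a.isLt
    have := b.isLt
    have h3 := permVal_inj σ (show m + 1 + (a:ℕ) < n by omega) (show m + 1 + (b:ℕ) < n by omega) hab
    exact Fin.ext (by omega)
  set β : Equiv.Perm (Fin (n - m - 1)) :=
    Equiv.ofBijective fβ (Finite.injective_iff_bijective.mp hβinj) with hβ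
  refine ⟨α, β, ?_⟩
  apply Equiv.ext
  intro x
  apply Fin.ext
  have hx := x.isLt
  have hval : (σ x : ℕ) = permVal σ x := by
    simp [permVal, x.isLt]
  rcases Nat.lt_trichotomy (x : ℕ) m with hc | hc | hc
  · have h1 : permVal (comb n m hm α β) x = (n - m - 1) + permVal α x :=
      permVal_comb_lt hm α β hc
    have h2 : permVal α x = permVal σ x - (n - m - 1) := by
      simp only [permVal, hc, dif_pos, hα, Equiv.ofBijective_apply, hfα]
    have h3 : permVal (comb n m hm α β) x = ((comb n m hm α β) x : ℕ) := by
      simp [permVal, x.isLt]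
    rw [hval, ← h3, h1, h2]
    have := hlb x hc
    omega
  · have h1 : permVal (comb n m hm α β) m = n - 1 := permVal_comb_eq hm α β
    have h3 : permVal (comb n m hm α β) (x : ℕ) = ((comb n m hm α β) x : ℕ) := by
      simp [permVal, x.isLt]
    rw [hval, hc, hmax, ← h3, hc, h1]
  · have h1 : permVal (comb n m hm α β) x = permVal β ((x : ℕ) - m - 1) :=
      permVal_comb_gt hm α β hc x.isLt
    have h2 : permVal β ((x : ℕ) - m - 1) = permVal σ (m + 1 + ((x : ℕ) - m - 1)) := by
      have hb : (x : ℕ) - m - 1 < n - m - 1 := by omega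
      simp only [permVal, hb, dif_pos, hβ, Equiv.ofBijective_apply, hfβ]
    have h3 : permVal (comb n m hm α β) x = ((comb n m hm α β) x : ℕ) := by
      simp [permVal, x.isLt]
    rw [hval, ← h3, h1, h2]
    have e : m + 1 + ((x : ℕ) - m - 1) = (x : ℕ) := by omega
    rw [e]

end Classify

section Machinery

lemma permVal_one {n : ℕ} {i : ℕ} (h : i < n) : permVal (1 : Equiv.Perm (Fin n)) i = i := by
  simp [permVal, h]

lemma occ13_2_one {n : ℕ} : occ13_2 (1 : Equiv.Perm (Fin n)) = 0 := by
  rw [occ13_2, Finset.card_eq_zero, Finset.filter_eq_empty_iff]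
  rintro ⟨i, j⟩ hmem hcon
  rw [Finset.mem_product, Finset.mem_range, Finset.mem_range] at hmem
  dsimp only at hmem hcon
  obtain ⟨h1, h2, h3⟩ := hcon
  rw [permVal_one (show i < n by omega), permVal_one hmem.2] at h2
  rw [permVal_one hmem.2, permVal_one (by omega : i + 1 < n)] at h3
  omega

lemma occ21_3_one {n : ℕ} : occ21_3 (1 : Equiv.Perm (Fin n)) = 0 := by
  rw [occ21_3, Finset.card_eq_zero, Finset.filter_eq_empty_iff]
  rintro ⟨i, j⟩ hmem hcon
  rw [Finset.mem_product, Finset.mem_range, Finset.mem_range] at hmem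
  dsimp only at hmem hcon
  obtain ⟨h1, h2, h3⟩ := hcon
  rw [permVal_one (show i + 1 < n by omega), permVal_one (show i < n by omega)] at h2
  omega

lemma desc_one {n : ℕ} : desc (1 : Equiv.Perm (Fin n)) = 0 := by
  rw [desc, Finset.card_eq_zero, Finset.filter_eq_empty_iff]
  intro i hmem ⟨h1, h2⟩
  rw [Finset.mem_range] at hmem
  rw [permVal_one hmem, permVal_one h1] at h2
  omega

lemma avoid_singleton {m : ℕ} :
    (Finset.univ.filter (fun α : Equiv.Perm (Fin m) =>
      occ13_2 α = 0 ∧ occ21_3 α = 0 ∧ desc α = 0)).card = 1 := by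
  rw [Finset.card_eq_one]
  refine ⟨1, ?_⟩
  ext α
  simp only [Finset.mem_filter, Finset.mem_univ, true_and, Finset.mem_singleton]
  constructor
  · rintro ⟨_, _, h3⟩
    exact desc_eq_zero_imp_one α h3
  · rintro rfl
    exact ⟨occ13_2_one, occ21_3_one, desc_one⟩

lemma occ21_3_pos_desc {m : ℕ} (α : Equiv.Perm (Fin m)) (h : 0 < occ21_3 α) : 0 < desc α := by
  rw [occ21_3] at h
  rw [Finset.card_pos] at h
  obtain ⟨⟨i, j⟩, hij⟩ := h
  rw [Finset.mem_filter, Finset.mem_product, Finset.mem_range, Finset.mem_range] at hij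
  obtain ⟨⟨hi, hj⟩, h1, h2, h3⟩ := hij
  rw [desc, Finset.card_pos]
  refine ⟨i, Finset.mem_filter.2 ⟨Finset.mem_range.2 (by omega), by omega, h2⟩⟩

lemma comb_inj {n m : ℕ} (hm : m < n) (α α' : Equiv.Perm (Fin m))
    (β β' : Equiv.Perm (Fin (n - m - 1))) (h : comb n m hm α β = comb n m hm α' β') :
    α = α' ∧ β = β' := by
  constructor
  · apply Equiv.ext
    intro x
    apply Fin.ext
    have hx := x.isLt
    have h1 := permVal_comb_lt hm α β hx
    have h2 := permVal_comb_lt hm α' β' hx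
    rw [h] at h1
    have h3 : permVal α (x : ℕ) = permVal α' (x : ℕ) := by omega
    simp only [permVal, hx, dif_pos, Fin.eta] at h3
    exact h3
  · apply Equiv.ext
    intro x
    apply Fin.ext
    have hx := x.isLt
    have h1 := permVal_comb_gt hm α β (show m < m + 1 + (x:ℕ) by omega) (by omega)
    have h2 := permVal_comb_gt hm α' β' (show m < m + 1 + (x:ℕ) by omega) (by omega)
    rw [h] at h1
    have e : m + 1 + (x:ℕ) - m - 1 = (x:ℕ) := by omega
    rw [e] at h1 h2
    have h3 : permVal β (x : ℕ) = permVal β' (x : ℕ) := by omega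
    simp only [permVal, hx, dif_pos, Fin.eta] at h3
    exact h3

lemma class_card {n m : ℕ} (hm : m < n) (P : ℕ → ℕ → Prop) [∀ a b, Decidable (P a b)] :
    (Finset.univ.filter (fun σ : Equiv.Perm (Fin n) =>
      permVal σ m = n - 1 ∧ occ13_2 σ = 0 ∧ P (occ21_3 σ) (desc σ))).card =
    (Finset.univ.filter (fun p : Equiv.Perm (Fin m) × Equiv.Perm (Fin (n - m - 1)) =>
      occ13_2 p.1 = 0 ∧ occ13_2 p.2 = 0 ∧
      P (occ21_3 p.1 + desc p.1 + occ21_3 p.2)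
        (desc p.1 + desc p.2 + (if m + 1 < n then 1 else 0)))).card := by
  classical
  apply Eq.symm
  apply Finset.card_bij (fun p _ => comb n m hm p.1 p.2)
  · rintro ⟨pα, pβ⟩ hp
    rw [Finset.mem_filter] at hp
    obtain ⟨-, h1, h2, h3⟩ := hp
    rw [Finset.mem_filter]
    refine ⟨Finset.mem_univ _, permVal_comb_eq hm pα pβ, ?_, ?_⟩
    · rw [occ13_2_comb hm pα pβ, h1, h2]
    · rw [occ21_3_comb hm pα pβ, desc_comb hm pα pβ]
      exact h3
  · rintro ⟨pα, pβ⟩ hp ⟨qα, qβ⟩ hq heq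
    obtain ⟨e1, e2⟩ := comb_inj hm pα qα pβ qβ heq
    rw [e1, e2]
  · intro σ hσ
    rw [Finset.mem_filter] at hσ
    obtain ⟨-, hmax, h0, hP⟩ := hσ
    obtain ⟨α, β, rfl⟩ := exists_comb hm σ h0 hmax
    rw [occ13_2_comb hm α β] at h0
    rw [occ21_3_comb hm α β, desc_comb hm α β] at hP
    refine ⟨(α, β), Finset.mem_filter.2 ⟨Finset.mem_univ _, by dsimp only; omega,
      by dsimp only; omega, hP⟩, rfl⟩

lemma count_by_max (n : ℕ) (hn : 1 ≤ n) (Q : Equiv.Perm (Fin n) → Prop) [DecidablePred Q] :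
    (Finset.univ.filter Q).card =
    ∑ m ∈ Finset.range n,
      (Finset.univ.filter (fun σ : Equiv.Perm (Fin n) =>
        permVal σ m = n - 1 ∧ Q σ)).card := by
  classical
  rw [Finset.card_eq_sum_card_fiberwise
    (f := fun σ : Equiv.Perm (Fin n) => ((σ.symm ⟨n-1, by omega⟩ : Fin n) : ℕ))
    (t := Finset.range n) (fun σ _ => Finset.mem_range.2 (Fin.isLt _))]
  apply Finset.sum_congr rfl
  intro m hm
  rw [Finset.mem_range] at hm
  rw [Finset.filter_filter]
  congr 1
  apply Finset.filter_congr
  intro σ _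
  have key : ((σ.symm ⟨n-1, by omega⟩ : Fin n) : ℕ) = m ↔ permVal σ m = n - 1 := by
    constructor
    · intro h
      have h2 : σ.symm ⟨n-1, by omega⟩ = ⟨m, hm⟩ := Fin.ext h
      have h3 := congrArg σ h2
      rw [Equiv.apply_symm_apply] at h3
      simp only [permVal, hm, dif_pos]
      rw [← h3]
    · intro h
      simp only [permVal, hm, dif_pos] at h
      have h2 : σ ⟨m, hm⟩ = ⟨n-1, by omega⟩ := Fin.ext h
      have h3 := congrArg σ.symm h2
      rw [Equiv.symm_apply_apply] at h3
      rw [← h3]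
  constructor
  · rintro ⟨hq, hf⟩
    exact ⟨key.1 hf, hq⟩
  · rintro ⟨hf, hq⟩
    exact ⟨hq, key.2 hf⟩

lemma filter_prod_card {A B : Type*} [Fintype A] [Fintype B] [DecidableEq A] [DecidableEq B]
    (P1 : A → Prop) (P2 : B → Prop) [DecidablePred P1] [DecidablePred P2] :
    (Finset.univ.filter (fun p : A × B => P1 p.1 ∧ P2 p.2)).card =
    (Finset.univ.filter P1).card * (Finset.univ.filter P2).card := by
  rw [← Finset.card_product]
  congr 1
  rw [← Finset.univ_product_univ, Finset.filter_product]

end Machinery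

section Counts

noncomputable def Fc (n : ℕ) : ℕ :=
  (Finset.univ.filter (fun σ : Equiv.Perm (Fin n) => occ13_2 σ = 0 ∧ occ21_3 σ = 0)).card

noncomputable def Hc (n : ℕ) : ℕ :=
  (Finset.univ.filter (fun σ : Equiv.Perm (Fin n) =>
    occ13_2 σ = 0 ∧ occ21_3 σ = 0 ∧ desc σ = 1)).card

noncomputable def Gc (n : ℕ) : ℕ :=
  (Finset.univ.filter (fun σ : Equiv.Perm (Fin n) => occ13_2 σ = 0 ∧ occ21_3 σ = 1)).card

lemma desc_of_zero {k : ℕ} (hk : k = 0) (β : Equiv.Perm (Fin k)) : desc β = 0 := by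
  subst hk
  rw [desc]
  simp

lemma Fc_rec (n : ℕ) (hn : 1 ≤ n) : Fc n = ∑ m ∈ Finset.range n, Fc (n - m - 1) := by
  classical
  rw [Fc, count_by_max n hn]
  apply Finset.sum_congr rfl
  intro m hmr
  have hm : m < n := Finset.mem_range.1 hmr
  have hcc := class_card hm (fun o _ => o = 0)
  rw [hcc]
  have heq : (Finset.univ.filter
      (fun p : Equiv.Perm (Fin m) × Equiv.Perm (Fin (n - m - 1)) =>
        occ13_2 p.1 = 0 ∧ occ13_2 p.2 = 0 ∧
        occ21_3 p.1 + desc p.1 + occ21_3 p.2 = 0)) =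
      (Finset.univ.filter
      (fun p : Equiv.Perm (Fin m) × Equiv.Perm (Fin (n - m - 1)) =>
        (occ13_2 p.1 = 0 ∧ occ21_3 p.1 = 0 ∧ desc p.1 = 0) ∧
        (occ13_2 p.2 = 0 ∧ occ21_3 p.2 = 0))) := by
    apply Finset.filter_congr
    intro p _
    constructor
    · rintro ⟨h1, h2, h3⟩
      exact ⟨⟨h1, by omega, by omega⟩, h2, by omega⟩
    · rintro ⟨⟨h1, h2, h3⟩, h4, h5⟩
      exact ⟨h1, h4, by omega⟩
  have hp := filter_prod_card
    (P1 := fun α : Equiv.Perm (Fin m) => occ13_2 α = 0 ∧ occ21_3 α = 0 ∧ desc α = 0)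
    (P2 := fun β : Equiv.Perm (Fin (n - m - 1)) => occ13_2 β = 0 ∧ occ21_3 β = 0)
  rw [heq, hp, avoid_singleton, one_mul]
  rfl

lemma Hc_rec (n : ℕ) (hn : 1 ≤ n) :
    Hc n = ∑ m ∈ Finset.range n, (if m + 1 < n then 1 else 0) := by
  classical
  rw [Hc, count_by_max n hn]
  apply Finset.sum_congr rfl
  intro m hmr
  have hm : m < n := Finset.mem_range.1 hmr
  have hcc := class_card hm (fun o d => o = 0 ∧ d = 1)
  rw [hcc]
  by_cases hc : m + 1 < n
  · rw [if_pos hc] at *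
    have heq : (Finset.univ.filter
        (fun p : Equiv.Perm (Fin m) × Equiv.Perm (Fin (n - m - 1)) =>
          occ13_2 p.1 = 0 ∧ occ13_2 p.2 = 0 ∧
          occ21_3 p.1 + desc p.1 + occ21_3 p.2 = 0 ∧
            desc p.1 + desc p.2 + 1 = 1)) =
        (Finset.univ.filter
        (fun p : Equiv.Perm (Fin m) × Equiv.Perm (Fin (n - m - 1)) =>
          (occ13_2 p.1 = 0 ∧ occ21_3 p.1 = 0 ∧ desc p.1 = 0) ∧
          (occ13_2 p.2 = 0 ∧ occ21_3 p.2 = 0 ∧ desc p.2 = 0))) := by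
      apply Finset.filter_congr
      intro p _
      constructor
      · rintro ⟨h1, h2, h3, h4⟩
        exact ⟨⟨h1, by omega, by omega⟩, h2, by omega, by omega⟩
      · rintro ⟨⟨h1, h2, h3⟩, h4, h5, h6⟩
        exact ⟨h1, h4, by omega, by omega⟩
    have hp := filter_prod_card
      (P1 := fun α : Equiv.Perm (Fin m) => occ13_2 α = 0 ∧ occ21_3 α = 0 ∧ desc α = 0)
      (P2 := fun β : Equiv.Perm (Fin (n - m - 1)) =>
        occ13_2 β = 0 ∧ occ21_3 β = 0 ∧ desc β = 0)
    rw [heq, hp, avoid_singleton, avoid_singleton]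
  · rw [if_neg hc] at *
    rw [Finset.card_eq_zero, Finset.filter_eq_empty_iff]
    intro p _
    rintro ⟨h1, h2, h3, h4⟩
    have h5 : desc p.2 = 0 := desc_of_zero (by omega) p.2
    omega

lemma Gc_rec (n : ℕ) (hn : 1 ≤ n) :
    Gc n = ∑ m ∈ Finset.range n, (Hc m * Fc (n - m - 1) + Gc (n - m - 1)) := by
  classical
  rw [Gc, count_by_max n hn]
  apply Finset.sum_congr rfl
  intro m hmr
  have hm : m < n := Finset.mem_range.1 hmr
  have hcc := class_card hm (fun o _ => o = 1)
  rw [hcc]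
  have heq : (Finset.univ.filter
      (fun p : Equiv.Perm (Fin m) × Equiv.Perm (Fin (n - m - 1)) =>
        occ13_2 p.1 = 0 ∧ occ13_2 p.2 = 0 ∧
        occ21_3 p.1 + desc p.1 + occ21_3 p.2 = 1)) =
      (Finset.univ.filter
      (fun p : Equiv.Perm (Fin m) × Equiv.Perm (Fin (n - m - 1)) =>
        ((occ13_2 p.1 = 0 ∧ occ21_3 p.1 = 0 ∧ desc p.1 = 1) ∧
          (occ13_2 p.2 = 0 ∧ occ21_3 p.2 = 0)) ∨
        ((occ13_2 p.1 = 0 ∧ occ21_3 p.1 = 0 ∧ desc p.1 = 0) ∧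
          (occ13_2 p.2 = 0 ∧ occ21_3 p.2 = 1)))) := by
    apply Finset.filter_congr
    intro p _
    constructor
    · rintro ⟨h1, h2, h3⟩
      have h4 : occ21_3 p.1 = 0 := by
        by_contra hcon
        have := occ21_3_pos_desc p.1 (by omega)
        omega
      rcases Nat.eq_zero_or_pos (desc p.1) with h5 | h5
      · right
        exact ⟨⟨h1, h4, h5⟩, h2, by omega⟩
      · left
        exact ⟨⟨h1, h4, by omega⟩, h2, by omega⟩
    · rintro (⟨⟨h1, h2, h3⟩, h4, h5⟩ | ⟨⟨h1, h2, h3⟩, h4, h5⟩)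
      · exact ⟨h1, h4, by omega⟩
      · exact ⟨h1, h4, by omega⟩
  have hp1 := filter_prod_card
    (P1 := fun α : Equiv.Perm (Fin m) => occ13_2 α = 0 ∧ occ21_3 α = 0 ∧ desc α = 1)
    (P2 := fun β : Equiv.Perm (Fin (n - m - 1))  => occ13_2 β = 0 ∧ occ21_3 β = 0)
  have hp2 := filter_prod_card
    (P1 := fun α : Equiv.Perm (Fin m) => occ13_2 α = 0 ∧ occ21_3 α = 0 ∧ desc α = 0)
    (P2 := fun β : Equiv.Perm (Fin (n - m - 1)) => occ13_2 β = 0 ∧ occ21_3 β = 1)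
  rw [heq, Finset.filter_or, Finset.card_union_of_disjoint, hp1, hp2, avoid_singleton,
    one_mul]
  · rfl
  · rw [Finset.disjoint_filter]
    rintro p _ ⟨⟨_, _, h3⟩, _⟩ ⟨⟨_, _, h6⟩, _⟩
    omega

lemma Fc_zero : Fc 0 = 1 := by
  classical
  rw [Fc]
  have : (Finset.univ.filter (fun σ : Equiv.Perm (Fin 0) =>
      occ13_2 σ = 0 ∧ occ21_3 σ = 0)) = Finset.univ := by
    apply Finset.filter_true_of_mem
    intro σ _
    rw [Subsingleton.elim σ 1]
    exact ⟨occ13_2_one, occ21_3_one⟩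
  rw [this, Finset.card_univ, Fintype.card_perm]
  rfl

lemma Gc_zero : Gc 0 = 0 := by
  classical
  rw [Gc, Finset.card_eq_zero, Finset.filter_eq_empty_iff]
  intro σ _
  rw [Subsingleton.elim σ 1, occ21_3_one]
  rintro ⟨_, h⟩
  omega

lemma Gc_one : Gc 1 = 0 := by
  classical
  rw [Gc, Finset.card_eq_zero, Finset.filter_eq_empty_iff]
  intro σ _
  rw [Subsingleton.elim σ 1, occ21_3_one]
  rintro ⟨_, h⟩
  omega

end Counts

section Arith

def fP (k : ℕ) : ℕ := if k = 0 then 1 else 2^(k-1)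
def gP (k : ℕ) : ℕ := (k-2) * 2^(k-3)

lemma sum_fP : ∀ n, (∑ k ∈ Finset.range n, fP k) = if n = 0 then 0 else 2^(n-1) := by
  intro n
  induction n with
  | zero => simp
  | succ N ih =>
    rw [Finset.sum_range_succ, ih]
    by_cases h : N = 0
    · subst h; simp [fP]
    · rw [if_neg h, if_neg (by omega)]
      have e1 : fP N = 2^(N-1) := by rw [fP, if_neg h]
      have e2 : (2:ℕ)^N = 2 * 2^(N-1) := by
        rw [← pow_succ']
        congr 1
        omega
      have e3 : N + 1 - 1 = N := by omega
      rw [e1, e3, e2]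
      omega

lemma Fc_closed : ∀ n, Fc n = fP n := by
  intro n
  induction n using Nat.strong_induction_on with
  | _ n ih =>
    rcases Nat.eq_zero_or_pos n with h | h
    · subst h; rw [Fc_zero, fP]; simp
    · rw [Fc_rec n h]
      have hterm : ∀ m ∈ Finset.range n, Fc (n - m - 1) = fP (n - 1 - m) := by
        intro m hm
        rw [Finset.mem_range] at hm
        have e : n - m - 1 = n - 1 - m := by omega
        rw [e, ih (n - 1 - m) (by omega)]
      rw [Finset.sum_congr rfl hterm, Finset.sum_range_reflect, sum_fP, fP,
        if_neg (by omega), if_neg (by omega)]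

lemma Hc_zero : Hc 0 = 0 := by
  classical
  rw [Hc, Finset.card_eq_zero, Finset.filter_eq_empty_iff]
  intro σ _
  rintro ⟨_, _, h⟩
  rw [desc_of_zero rfl σ] at h
  omega

lemma Hc_closed : ∀ n, Hc n = n - 1 := by
  intro n
  rcases Nat.eq_zero_or_pos n with h | h
  · subst h; exact Hc_zero
  · rw [Hc_rec n h]
    obtain ⟨N, rfl⟩ : ∃ N, n = N + 1 := ⟨n - 1, by omega⟩
    rw [Finset.sum_range_succ, if_neg (by omega)]
    have hterm : ∀ m ∈ Finset.range N, (if m + 1 < N + 1 then (1:ℕ) else 0) = 1 := by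
      intro m hm
      rw [Finset.mem_range] at hm
      rw [if_pos (by omega)]
    rw [Finset.sum_congr rfl hterm, Finset.sum_const, smul_eq_mul, Finset.card_range]
    omega

lemma sumA : ∀ N, (∑ m ∈ Finset.range (N+3), (m-1) * fP (N+2-m)) + 1 = 2^(N+1) := by
  intro N
  induction N with
  | zero =>
    rw [Finset.sum_range_succ, Finset.sum_range_succ, Finset.sum_range_succ,
      Finset.sum_range_zero]
    norm_num [fP]
  | succ N ih =>
    rw [Finset.sum_range_succ]
    have hterm : ∀ m ∈ Finset.range (N+3),
        (m-1) * fP (N+3-m) + (if m = N+2 then N+1 else 0) = 2 * ((m-1) * fP (N+2-m)) := by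
      intro m hm
      rw [Finset.mem_range] at hm
      by_cases hc : m = N + 2
      · subst hc
        have e1 : N + 3 - (N+2) = 1 := by omega
        have e2 : N + 2 - (N+2) = 0 := by omega
        rw [e1, e2, if_pos rfl]
        have e3 : fP 1 = 1 := by norm_num [fP]
        have e4 : fP 0 = 1 := by norm_num [fP]
        rw [e3, e4]
        have e5 : N + 2 - 1 = N + 1 := by omega
        rw [e5]
        ring
      · rw [if_neg hc]
        have e1 : fP (N+3-m) = 2^(N+2-m) := by
          rw [fP, if_neg (by omega)]
          congr 1
          omega
        have e2 : fP (N+2-m) = 2^(N+1-m) := by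
          rw [fP, if_neg (by omega)]
          congr 1
          omega
        have e3 : (2:ℕ)^(N+2-m) = 2 * 2^(N+1-m) := by
          rw [← pow_succ']
          congr 1
          omega
        rw [e1, e2, e3]
        ring
    have hsum : (∑ m ∈ Finset.range (N+3), (m-1) * fP (N+3-m)) + (N+1)
        = 2 * ∑ m ∈ Finset.range (N+3), (m-1) * fP (N+2-m) := by
      rw [Finset.mul_sum, ← Finset.sum_congr rfl hterm, Finset.sum_add_distrib,
        Finset.sum_ite_eq' (Finset.range (N+3)) (N+2) (fun _ => N+1),
        if_pos (Finset.mem_range.2 (by omega))]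
    have hterm2 : ∀ m ∈ Finset.range (N+3), (m-1) * fP (N+1+2-m) = (m-1) * fP (N+3-m) := by
      intro m hm
      rfl
    rw [Finset.sum_congr rfl hterm2]
    have e6 : N + 1 + 2 - (N+3) = 0 := by omega
    have e7 : fP 0 = 1 := by norm_num [fP]
    have e8 : N + 3 - 1 = N + 2 := by omega
    rw [e6, e7, e8]
    have e9 : (2:ℕ)^(N+1+1) = 2 * 2^(N+1) := by rw [← pow_succ']
    omega

lemma sumS : ∀ N, (∑ k ∈ Finset.range (N+3), gP k) + 2^N = N * 2^N + 1 := by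
  intro N
  induction N with
  | zero =>
    rw [Finset.sum_range_succ, Finset.sum_range_succ, Finset.sum_range_succ,
      Finset.sum_range_zero]
    norm_num [gP]
  | succ N ih =>
    rw [Finset.sum_range_succ]
    have e1 : gP (N+3) = (N+1) * 2^N := by
      rw [gP]
      congr 2 <;> omega
    have e2 : (2:ℕ)^(N+1) = 2 * 2^N := by rw [← pow_succ']
    have e3 : (N+1) * 2^(N+1) = 2 * (N * 2^N) + 2 * 2^N := by
      rw [e2]; ring
    have e4 : (N+1) * 2^N = N * 2^N + 2^N := by ring
    omega

lemma Gc_closed : ∀ n, Gc n = gP n := by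
  intro n
  induction n using Nat.strong_induction_on with
  | _ n ih =>
    match n, ih with
    | 0, _ => rw [Gc_zero]; norm_num [gP]
    | 1, _ => rw [Gc_one]; norm_num [gP]
    | 2, ih =>
      rw [Gc_rec 2 (by omega), Finset.sum_range_succ, Finset.sum_range_succ,
        Finset.sum_range_zero, gP]
      norm_num [Hc_zero, Hc_closed 1, Gc_zero, Gc_one]
    | (N+3), ih =>
      rw [Gc_rec (N+3) (by omega)]
      rw [Finset.sum_add_distrib]
      have hterm1 : ∀ m ∈ Finset.range (N+3),
          Hc m * Fc (N+3-m-1) = (m-1) * fP (N+2-m) := by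
        intro m hm
        rw [Hc_closed m, Fc_closed]
        congr 2
        omega
      have hterm2 : ∀ m ∈ Finset.range (N+3), Gc (N+3-m-1) = gP (N+3-1-m) := by
        intro m hm
        rw [Finset.mem_range] at hm
        have e : N+3-m-1 = N+3-1-m := by omega
        rw [e, ih (N+3-1-m) (by omega)]
      rw [Finset.sum_congr rfl hterm1, Finset.sum_congr rfl hterm2,
        Finset.sum_range_reflect]
      have hA := sumA N
      have hS := sumS N
      have e1 : gP (N+3) = (N+1) * 2^N := by
        rw [gP]
        congr 2 <;> omega
      have e2 : (2:ℕ)^(N+1) = 2 * 2^N := by rw [← pow_succ']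
      have e4 : (N+1) * 2^N = N * 2^N + 2^N := by ring
      omega

end Arith

theorem stmt11 (n : ℕ) (hn : 2 ≤ n) :
    (Finset.univ.filter (fun π : Equiv.Perm (Fin n) =>
      occ13_2 π = 0 ∧ occ21_3 π = 1)).card = (n - 2) * 2 ^ (n - 3) := by
  have h := Gc_closed n
  rw [Gc, gP] at h
  exact h
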